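/- Let J > J_c where J_c = Σ_{y₁>0, y₂∈ℤ} y₁/(y₁²+y₂²)^{p/2} with p > 4. Then for the Hamiltonian H(σ) = -J Σ_{⟨x,y⟩}(σₓσ_y - 1) + Σ_{{x,y}} (σₓσ_y - 1)/|x-y|^p on ℤ², the constant configurations σ ≡ +1 and σ ≡ -1 are infinite volume ground states: for any finite X ⊂ ℤ² and any σ_X ∈ {±1}^X, H_X(σ_X | σ⁺) ≥ H_X(σ⁺_X | σ⁺) = 0. -/

import Mathlib

/-- Euclidean norm of a point of `ℤ²`. -/
noncomputable def zNorm (x : ℤ × ℤ) : ℝ := Real.sqrt ((x.1 : ℝ) ^ 2 + (x.2 : ℝ) ^ 2)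

/-- `J_c = Σ_{y₁ > 0, y₂ ∈ ℤ} y₁/(y₁² + y₂²)^{p/2}`. -/
noncomputable def Jcrit (p : ℝ) : ℝ :=
  ∑' y : ℤ × ℤ, if 0 < y.1 then (y.1 : ℝ) / ((y.1 : ℝ) ^ 2 + (y.2 : ℝ) ^ 2) ^ (p / 2) else 0

/-- `H_X(σ_X | s)`: relative energy of the configuration equal to `σ` on the finite set
`X` and to the boundary condition `s` outside `X`, for the Hamiltonian
`H(σ) = -J Σ_{⟨x,y⟩}(σₓσ_y - 1) + Σ_{{x,y}} (σₓσ_y - 1)/|x-y|^p`. -/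
noncomputable def energyBC (p J : ℝ) (X : Finset (ℤ × ℤ)) (σ s : ℤ × ℤ → ℤ) : ℝ :=
  -J * ((1 / 2) * ∑ x ∈ X, ∑ y ∈ X,
      (if zNorm (x - y) = 1 then ((σ x * σ y : ℤ) : ℝ) - 1 else 0))
  + (1 / 2) * ∑ x ∈ X, ∑ y ∈ X,
      (if x = y then 0 else (((σ x * σ y : ℤ) : ℝ) - 1) / zNorm (x - y) ^ p)
  - J * ∑ x ∈ X, ∑' y : {y : ℤ × ℤ // y ∉ X},
      (if zNorm (x - (y : ℤ × ℤ)) = 1 then ((σ x * s (y : ℤ × ℤ) : ℤ) : ℝ) - 1 else 0)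
  + ∑ x ∈ X, ∑' y : {y : ℤ × ℤ // y ∉ X},
      (((σ x * s (y : ℤ × ℤ) : ℤ) : ℝ) - 1) / zNorm (x - (y : ℤ × ℤ)) ^ p

noncomputable section GSaux

def Qn (v : ℤ × ℤ) : ℝ := (v.1 : ℝ) ^ 2 + (v.2 : ℝ) ^ 2

def Kk (p : ℝ) (v : ℤ × ℤ) : ℝ := if v = 0 then 0 else 1 / Qn v ^ (p / 2)

lemma Qn_nonneg (v : ℤ × ℤ) : 0 ≤ Qn v := by unfold Qn; positivity

lemma Qn_pos {v : ℤ × ℤ} (hv : v ≠ 0) : 0 < Qn v := by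
  have h1 : v.1 ≠ 0 ∨ v.2 ≠ 0 := by
    by_contra h; push_neg at h; exact hv (Prod.ext h.1 h.2)
  have : (0:ℝ) < (v.1:ℝ) ^ 2 ∨ (0:ℝ) < (v.2:ℝ)^2 := by
    rcases h1 with h | h
    · left; positivity
    · right; positivity
  rcases this with h | h <;> unfold Qn <;> nlinarith [sq_nonneg (v.1:ℝ), sq_nonneg (v.2:ℝ)]

lemma Qn_one_le {v : ℤ × ℤ} (hv : v ≠ 0) : 1 ≤ Qn v := by
  have h1 : v.1 ≠ 0 ∨ v.2 ≠ 0 := by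
    by_contra h; push_neg at h; exact hv (Prod.ext h.1 h.2)
  unfold Qn
  rcases h1 with h | h
  · have : (1:ℝ) ≤ |(v.1:ℝ)| := by
      rw [← Int.cast_abs]; exact_mod_cast Int.one_le_abs h
    nlinarith [sq_nonneg (v.2:ℝ), sq_abs (v.1:ℝ)]
  · have : (1:ℝ) ≤ |(v.2:ℝ)| := by
      rw [← Int.cast_abs]; exact_mod_cast Int.one_le_abs h
    nlinarith [sq_nonneg (v.1:ℝ), sq_abs (v.2:ℝ)]

lemma Kk_nonneg (p : ℝ) (v : ℤ × ℤ) : 0 ≤ Kk p v := by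
  unfold Kk
  split
  · exact le_refl 0
  · exact div_nonneg zero_le_one (Real.rpow_nonneg (Qn_nonneg v) _)

lemma Kk_neg (p : ℝ) (v : ℤ × ℤ) : Kk p (-v) = Kk p v := by
  unfold Kk Qn
  simp [neg_eq_zero]

lemma Kk_swap (p : ℝ) (v : ℤ × ℤ) : Kk p (v.2, v.1) = Kk p v := by
  unfold Kk Qn
  rcases eq_or_ne v 0 with rfl | hv
  · simp
  · have hv' : ((v.2, v.1) : ℤ × ℤ) ≠ 0 := by
      intro h0
      exact hv (by simpa [Prod.ext_iff, and_comm] using h0)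
    rw [if_neg hv', if_neg hv]
    ring_nf

lemma zNorm_pow (p : ℝ) (v : ℤ × ℤ) : zNorm v ^ p = Qn v ^ (p / 2) := by
  show Real.sqrt (Qn v) ^ p = _
  rw [Real.sqrt_eq_rpow, ← Real.rpow_mul (Qn_nonneg v)]
  ring_nf

lemma zNorm_eq_one_iff (v : ℤ × ℤ) :
    zNorm v = 1 ↔ v = (1,0) ∨ v = (-1,0) ∨ v = (0,1) ∨ v = (0,-1) := by
  obtain ⟨a, b⟩ := v
  constructor
  · intro h
    have hQ : Qn (a, b) = 1 := by
      have := Real.sqrt_eq_one.mp (h : Real.sqrt (Qn (a,b)) = 1)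
      exact this
    have hZ : a ^ 2 + b ^ 2 = 1 := by
      have : ((a ^ 2 + b ^ 2 : ℤ) : ℝ) = 1 := by push_cast; simpa [Qn] using hQ
      exact_mod_cast this
    have ha1 : -1 ≤ a := by nlinarith [sq_nonneg b]
    have ha2 : a ≤ 1 := by nlinarith [sq_nonneg b]
    have hb1 : -1 ≤ b := by nlinarith [sq_nonneg a]
    have hb2 : b ≤ 1 := by nlinarith [sq_nonneg a]
    interval_cases a <;> interval_cases b <;> simp_all [Prod.ext_iff] <;> omega
  · rintro (h | h | h | h) <;> simp [Prod.ext_iff] at h <;>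
      simp [zNorm, h.1, h.2] <;> norm_num

end GSaux

noncomputable section GSsum

lemma summable_h {q : ℝ} (hq : 2 < q) :
    Summable (fun n : ℤ => (1 + (n:ℝ)^2) ^ (-(q/4))) := by
  have hs : (1:ℝ) < q / 2 := by linarith
  have h1 : Summable (fun n : ℤ => 1 / |(n:ℝ)| ^ (q/2)) := by
    have := (Real.summable_one_div_int_add_rpow 0 (q/2)).mpr hs
    simpa using this
  have h2 : Summable (fun n : ℤ => if n = 0 then (1:ℝ) else 0) :=
    summable_of_ne_finset_zero (s := {0}) (by intro b hb; simp at hb ⊢; exact hb)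
  apply Summable.of_nonneg_of_le (fun n => Real.rpow_nonneg (by positivity) _)
    (fun n => ?_) (h2.add h1)
  rcases eq_or_ne n 0 with rfl | hn
  · have hq2 : q/2 ≠ 0 := ne_of_gt (by linarith)
    simp [Real.zero_rpow hq2, Real.one_rpow]
  · simp only [if_neg hn, zero_add]
    have habs : (1:ℝ) ≤ |(n:ℝ)| := by
      rw [← Int.cast_abs]; exact_mod_cast Int.one_le_abs hn
    have hlt : (0:ℝ) < |(n:ℝ)| ^ 2 := by positivity
    have hle : |(n:ℝ)| ^ 2 ≤ 1 + (n:ℝ)^2 := by nlinarith [sq_abs (n:ℝ)]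
    have := Real.rpow_le_rpow_of_nonpos hlt hle (by linarith : -(q/4) ≤ 0)
    calc (1 + (n:ℝ)^2) ^ (-(q/4)) ≤ (|(n:ℝ)| ^ 2) ^ (-(q/4)) := this
      _ = |(n:ℝ)| ^ (-(q/2)) := by
          rw [← Real.rpow_natCast |(n:ℝ)| 2, ← Real.rpow_mul (abs_nonneg _),
            show ((2:ℕ):ℝ) * (-(q/4)) = -(q/2) by push_cast; ring]
      _ = 1 / |(n:ℝ)| ^ (q/2) := by
          rw [Real.rpow_neg (abs_nonneg _), one_div]

lemma summable_Kk {q : ℝ} (hq : 2 < q) : Summable (Kk q) := by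
  have hh := summable_h hq
  have hprod : Summable (fun v : ℤ × ℤ =>
      ((1 + (v.1:ℝ)^2) ^ (-(q/4))) * ((1 + (v.2:ℝ)^2) ^ (-(q/4)))) :=
    hh.mul_of_nonneg hh (fun n => Real.rpow_nonneg (by positivity) _)
      (fun n => Real.rpow_nonneg (by positivity) _)
  apply Summable.of_nonneg_of_le (fun v => Kk_nonneg q v) (fun v => ?_)
    (hprod.mul_left ((2:ℝ) ^ (q/2)))
  rcases eq_or_ne v 0 with rfl | hv
  · simp only [Kk, if_pos rfl]
    positivity
  · rw [Kk, if_neg hv]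
    have hQ1 : 1 ≤ Qn v := Qn_one_le hv
    have hQ0 : 0 < Qn v := by linarith
    -- (1+a)(1+b) ≤ (2 Qn)^2  where a = v1², b = v2²
    have hQ1' : (1:ℝ) ≤ (v.1:ℝ)^2 + (v.2:ℝ)^2 := hQ1
    have key : (1 + (v.1:ℝ)^2) * (1 + (v.2:ℝ)^2) ≤ (2 * Qn v)^2 := by
      unfold Qn
      nlinarith [sq_nonneg (v.1:ℝ), sq_nonneg (v.2:ℝ), hQ1',
        mul_nonneg (sq_nonneg (v.1:ℝ)) (sq_nonneg (v.2:ℝ)),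
        sq_nonneg ((v.1:ℝ)^2 + (v.2:ℝ)^2 - 1), sq_nonneg ((v.1:ℝ)*(v.2:ℝ))]
    have h1 : ((1 + (v.1:ℝ)^2) * (1 + (v.2:ℝ)^2)) ^ (q/4) ≤ ((2 * Qn v)^2) ^ (q/4) :=
      Real.rpow_le_rpow (by positivity) key (by linarith)
    have h2 : ((2 * Qn v)^2 : ℝ) ^ (q/4) = (2:ℝ)^(q/2) * Qn v ^ (q/2) := by
      rw [← Real.rpow_natCast (2 * Qn v) 2, ← Real.rpow_mul (by positivity)]
      rw [show ((2:ℕ):ℝ) * (q/4) = q/2 by push_cast; ring]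
      rw [Real.mul_rpow (by norm_num) hQ0.le]
    have h3 : ((1 + (v.1:ℝ)^2) * (1 + (v.2:ℝ)^2)) ^ (q/4)
        = ((1 + (v.1:ℝ)^2) ^ (q/4)) * ((1 + (v.2:ℝ)^2) ^ (q/4)) :=
      Real.mul_rpow (by positivity) (by positivity)
    set A := (1 + (v.1:ℝ)^2) ^ (q/4) with hAdef
    set B := (1 + (v.2:ℝ)^2) ^ (q/4) with hBdef
    set C := Qn v ^ (q/2) with hCdef
    have hA : (0:ℝ) < A := Real.rpow_pos_of_pos (by positivity) _
    have hB : (0:ℝ) < B := Real.rpow_pos_of_pos (by positivity) _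
    have hC : (0:ℝ) < C := Real.rpow_pos_of_pos hQ0 _
    have hD : A * B ≤ 2 ^ (q/2) * C := by rw [← h3]; exact h1.trans (le_of_eq h2)
    have e1 : (1 + (v.1:ℝ)^2) ^ (-(q/4)) = A⁻¹ := by
      rw [Real.rpow_neg (by positivity), hAdef]
    have e2 : (1 + (v.2:ℝ)^2) ^ (-(q/4)) = B⁻¹ := by
      rw [Real.rpow_neg (by positivity), hBdef]
    rw [e1, e2]
    have hre : (2:ℝ) ^ (q/2) * (A⁻¹ * B⁻¹) = 2 ^ (q/2) / (A * B) := by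
      field_simp
    rw [hre, div_le_div_iff₀ hC (by positivity), one_mul]
    exact hD
end GSsum

noncomputable section GSjc

lemma abs1_le_sqrtQ (v : ℤ × ℤ) : |(v.1:ℝ)| ≤ Qn v ^ ((1:ℝ)/2) := by
  rw [← Real.sqrt_eq_rpow, ← Real.sqrt_sq_eq_abs]
  exact Real.sqrt_le_sqrt (by unfold Qn; nlinarith [sq_nonneg (v.2:ℝ)])

lemma abs1K_le {p : ℝ} (v : ℤ × ℤ) : |(v.1:ℝ)| * Kk p v ≤ Kk (p-1) v := by
  rcases eq_or_ne v 0 with rfl | hv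
  · simp [Kk]
  · rw [Kk, Kk, if_neg hv, if_neg hv]
    have hQ0 : 0 < Qn v := Qn_pos hv
    have h1 : |(v.1:ℝ)| * (1 / Qn v ^ (p/2)) ≤ Qn v ^ ((1:ℝ)/2) * (1 / Qn v ^ (p/2)) := by
      apply mul_le_mul_of_nonneg_right (abs1_le_sqrtQ v)
      positivity
    refine h1.trans (le_of_eq ?_)
    rw [mul_one_div, ← Real.rpow_sub hQ0, show (1:ℝ)/2 - p/2 = -((p-1)/2) by ring,
      Real.rpow_neg hQ0.le, one_div]

lemma summable_abs1K {p : ℝ} (hp : 4 < p) : Summable (fun v : ℤ × ℤ => |(v.1:ℝ)| * Kk p v) := by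
  apply Summable.of_nonneg_of_le
    (fun v => mul_nonneg (abs_nonneg _) (Kk_nonneg p v)) (fun v => abs1K_le v)
  exact summable_Kk (by linarith : (2:ℝ) < p - 1)

lemma summable_abs2K {p : ℝ} (hp : 4 < p) : Summable (fun v : ℤ × ℤ => |(v.2:ℝ)| * Kk p v) := by
  have h := summable_abs1K hp
  rw [← (Equiv.prodComm ℤ ℤ).summable_iff]
  apply h.congr
  intro v
  simp only [Function.comp_apply, Equiv.prodComm_apply, Prod.fst_swap]
  rw [show (Prod.swap v : ℤ × ℤ) = (v.2, v.1) from rfl, Kk_swap]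

def jf (p : ℝ) (v : ℤ × ℤ) : ℝ := if 0 < v.1 then (v.1:ℝ) * Kk p v else 0

lemma jf_nonneg (p : ℝ) (v : ℤ × ℤ) : 0 ≤ jf p v := by
  unfold jf; split
  · exact mul_nonneg (by positivity) (Kk_nonneg p v)
  · exact le_refl 0

lemma jf_le (p : ℝ) (v : ℤ × ℤ) : jf p v ≤ |(v.1:ℝ)| * Kk p v := by
  unfold jf; split
  · exact mul_le_mul_of_nonneg_right (le_abs_self _) (Kk_nonneg p v)
  · exact mul_nonneg (abs_nonneg _) (Kk_nonneg p v)

lemma summable_jf {p : ℝ} (hp : 4 < p) : Summable (jf p) :=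
  Summable.of_nonneg_of_le (jf_nonneg p) (jf_le p) (summable_abs1K hp)

lemma Jcrit_eq (p : ℝ) : Jcrit p = ∑' v : ℤ × ℤ, jf p v := by
  unfold Jcrit
  apply tsum_congr
  intro v
  unfold jf
  rcases lt_or_ge 0 v.1 with h | h
  · rw [if_pos h, if_pos h, Kk, if_neg, mul_one_div]
    · rfl
    · intro h0
      rw [h0] at h
      exact lt_irrefl 0 h
  · rw [if_neg (not_lt.mpr h), if_neg (not_lt.mpr h)]

lemma decomp_abs1 (p : ℝ) (v : ℤ × ℤ) : |(v.1:ℝ)| * Kk p v = jf p v + jf p (-v) := by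
  unfold jf
  rcases lt_trichotomy v.1 0 with h | h | h
  · rw [if_neg (not_lt.mpr h.le), if_pos (by simpa using h : (0:ℤ) < (-v).1), Kk_neg]
    have : ((-v).1 : ℝ) = -(v.1:ℝ) := by
      rw [show (-v).1 = -v.1 from rfl]; push_cast; ring
    rw [this, abs_of_neg (by exact_mod_cast h : (v.1:ℝ) < 0)]
    ring
  · have h0 : ((v.1:ℝ)) = 0 := by exact_mod_cast h
    rw [if_neg (by omega), if_neg (by simp [h] : ¬ (0 < (-v).1)), h0]
    simp
  · rw [if_pos h, if_neg (by simp; omega : ¬ (0 < (-v).1))]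
    rw [abs_of_pos (by exact_mod_cast h : (0:ℝ) < (v.1:ℝ))]
    ring

lemma tsum_abs1K {p : ℝ} (hp : 4 < p) :
    ∑' v : ℤ × ℤ, |(v.1:ℝ)| * Kk p v = 2 * Jcrit p := by
  have hs := summable_jf hp
  have hs2 : Summable (fun v : ℤ × ℤ => jf p (-v)) := by
    rw [← (Equiv.neg (ℤ × ℤ)).summable_iff]
    apply hs.congr
    intro v
    simp
  calc ∑' v : ℤ × ℤ, |(v.1:ℝ)| * Kk p v
      = ∑' v : ℤ × ℤ, (jf p v + jf p (-v)) := tsum_congr (fun v => decomp_abs1 p v)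
    _ = (∑' v : ℤ × ℤ, jf p v) + ∑' v : ℤ × ℤ, jf p (-v) := Summable.tsum_add hs hs2
    _ = (∑' v : ℤ × ℤ, jf p v) + ∑' v : ℤ × ℤ, jf p v := by
        congr 1
        exact (Equiv.neg (ℤ × ℤ)).tsum_eq (jf p)
    _ = 2 * Jcrit p := by rw [← Jcrit_eq]; ring

lemma tsum_abs2K {p : ℝ} (hp : 4 < p) :
    ∑' v : ℤ × ℤ, |(v.2:ℝ)| * Kk p v = 2 * Jcrit p := by
  rw [← tsum_abs1K hp]
  rw [← (Equiv.prodComm ℤ ℤ).tsum_eq (fun v : ℤ × ℤ => |(v.1:ℝ)| * Kk p v)]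
  apply tsum_congr
  intro v
  simp only [Equiv.prodComm_apply]
  rw [show (Prod.swap v : ℤ × ℤ) = (v.2, v.1) from rfl, Kk_swap]

end GSjc

section GStel

lemma Ico_succ_right' {a b : ℤ} (h : a ≤ b) :
    Finset.Ico a (b+1) = insert b (Finset.Ico a b) := by
  ext n; simp only [Finset.mem_Ico, Finset.mem_insert]; omega

lemma oneD_le (τ : ℤ → ℝ) (hτ : ∀ n, τ n = 1 ∨ τ n = -1) (a : ℤ) :
    ∀ b, a ≤ b → 1 - τ a * τ b ≤ ∑ s ∈ Finset.Ico a b, (1 - τ s * τ (s+1)) := by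
  refine Int.le_induction ?_ ?_
  · simp only [Finset.Ico_self, Finset.sum_empty]
    rcases hτ a with h | h <;> rw [h] <;> norm_num
  · intro b hb ih
    rw [Ico_succ_right' hb, Finset.sum_insert (by simp)]
    have tri : 1 - τ a * τ (b+1) ≤ (1 - τ a * τ b) + (1 - τ b * τ (b+1)) := by
      rcases hτ a with h1 | h1 <;> rcases hτ b with h2 | h2 <;> rcases hτ (b+1) with h3 | h3 <;>
        rw [h1, h2, h3] <;> norm_num
    linarith

lemma oneD (τ : ℤ → ℝ) (hτ : ∀ n, τ n = 1 ∨ τ n = -1) (a b : ℤ) :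
    1 - τ a * τ b ≤ ∑ s ∈ Finset.Ico (min a b) (max a b), (1 - τ s * τ (s+1)) := by
  rcases le_total a b with h | h
  · rw [min_eq_left h, max_eq_right h]
    exact oneD_le τ hτ a b h
  · rw [min_eq_right h, max_eq_left h, mul_comm]
    exact oneD_le τ hτ b a h

lemma key2 (t : ℤ × ℤ → ℝ) (ht : ∀ z, t z = 1 ∨ t z = -1) (x v : ℤ × ℤ) :
    1 - t x * t (x+v) ≤
      (∑ s ∈ Finset.Ico (min x.1 (x.1+v.1)) (max x.1 (x.1+v.1)),
        (1 - t (s, x.2) * t (s+1, x.2)))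
      + ∑ s ∈ Finset.Ico (min x.2 (x.2+v.2)) (max x.2 (x.2+v.2)),
        (1 - t (x.1+v.1, s) * t (x.1+v.1, s+1)) := by
  have h1 := oneD (fun s => t (s, x.2)) (fun s => ht _) x.1 (x.1+v.1)
  have h2 := oneD (fun s => t (x.1+v.1, s)) (fun s => ht _) x.2 (x.2+v.2)
  have hxv : x + v = (x.1+v.1, x.2+v.2) := rfl
  have hx : x = (x.1, x.2) := rfl
  have tri : 1 - t x * t (x+v) ≤
      (1 - t x * t (x.1+v.1, x.2)) + (1 - t (x.1+v.1, x.2) * t (x+v)) := by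
    rcases ht x with h | h <;> rcases ht (x.1+v.1, x.2) with h' | h' <;>
      rcases ht (x+v) with h'' | h'' <;> rw [h, h', h''] <;> norm_num
  rw [hx] at tri
  rw [hxv] at tri ⊢
  linarith [h1, h2, tri]

end GStel

noncomputable section GSload

def chiH (u x v : ℤ × ℤ) : ℝ :=
  if u.2 = x.2 ∧ min x.1 (x.1+v.1) ≤ u.1 ∧ u.1 < max x.1 (x.1+v.1) then 1 else 0

def chiV (u x v : ℤ × ℤ) : ℝ :=
  if u.1 = x.1 + v.1 ∧ min x.2 (x.2+v.2) ≤ u.2 ∧ u.2 < max x.2 (x.2+v.2) then 1 else 0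

lemma chiH_nonneg (u x v : ℤ × ℤ) : 0 ≤ chiH u x v := by
  unfold chiH; split <;> norm_num

lemma chiV_nonneg (u x v : ℤ × ℤ) : 0 ≤ chiV u x v := by
  unfold chiV; split <;> norm_num

def TH (u v : ℤ × ℤ) : Finset (ℤ × ℤ) :=
  (Finset.Ioc (min u.1 (u.1-v.1)) (max u.1 (u.1-v.1))) ×ˢ {u.2}

def TV (u v : ℤ × ℤ) : Finset (ℤ × ℤ) :=
  {u.1 - v.1} ×ˢ (Finset.Ioc (min u.2 (u.2-v.2)) (max u.2 (u.2-v.2)))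

lemma chiH_eq_ind (u v x : ℤ × ℤ) : chiH u x v = if x ∈ TH u v then 1 else 0 := by
  unfold chiH TH
  congr 1
  simp only [Finset.mem_product, Finset.mem_Ioc, Finset.mem_singleton, eq_iff_iff]
  constructor
  · rintro ⟨h1, h2, h3⟩; omega
  · rintro ⟨⟨h1, h2⟩, h3⟩; omega

lemma chiV_eq_ind (u v x : ℤ × ℤ) : chiV u x v = if x ∈ TV u v then 1 else 0 := by
  unfold chiV TV
  congr 1
  simp only [Finset.mem_product, Finset.mem_Ioc, Finset.mem_singleton, eq_iff_iff]
  constructor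
  · rintro ⟨h1, h2, h3⟩; omega
  · rintro ⟨h3, h1, h2⟩; omega

lemma tsum_chiH (u v : ℤ × ℤ) : ∑' x : ℤ × ℤ, chiH u x v = |(v.1:ℝ)| := by
  rw [tsum_congr (chiH_eq_ind u v)]
  rw [tsum_eq_sum (s := TH u v) (by intro b hb; rw [if_neg hb])]
  rw [Finset.sum_ite_mem, Finset.inter_self, Finset.sum_const, nsmul_eq_mul, mul_one]
  unfold TH
  rw [Finset.card_product, Int.card_Ioc, Finset.card_singleton, mul_one]
  have h : max u.1 (u.1-v.1) - min u.1 (u.1-v.1) = |v.1| := by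
    rcases le_total 0 v.1 with h | h <;>
      rcases abs_cases v.1 with ⟨h1, h2⟩ | ⟨h1, h2⟩ <;> omega
  rw [h]
  have h2 := Int.toNat_of_nonneg (abs_nonneg v.1)
  calc ((|v.1|.toNat : ℕ) : ℝ) = ((|v.1| : ℤ) : ℝ) := by exact_mod_cast h2
    _ = |(v.1:ℝ)| := by push_cast; ring

lemma tsum_chiV (u v : ℤ × ℤ) : ∑' x : ℤ × ℤ, chiV u x v = |(v.2:ℝ)| := by
  rw [tsum_congr (chiV_eq_ind u v)]
  rw [tsum_eq_sum (s := TV u v) (by intro b hb; rw [if_neg hb])]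
  rw [Finset.sum_ite_mem, Finset.inter_self, Finset.sum_const, nsmul_eq_mul, mul_one]
  unfold TV
  rw [Finset.card_product, Int.card_Ioc, Finset.card_singleton, one_mul]
  have h : max u.2 (u.2-v.2) - min u.2 (u.2-v.2) = |v.2| := by
    rcases le_total 0 v.2 with h | h <;>
      rcases abs_cases v.2 with ⟨h1, h2⟩ | ⟨h1, h2⟩ <;> omega
  rw [h]
  have h2 := Int.toNat_of_nonneg (abs_nonneg v.2)
  calc ((|v.2|.toNat : ℕ) : ℝ) = ((|v.2| : ℤ) : ℝ) := by exact_mod_cast h2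
    _ = |(v.2:ℝ)| := by push_cast; ring

end GSload

noncomputable section GSload2

lemma summable_chiH_x (p : ℝ) (u v : ℤ × ℤ) :
    Summable (fun x : ℤ × ℤ => chiH u x v * Kk p v) := by
  apply summable_of_ne_finset_zero (s := TH u v)
  intro b hb
  rw [chiH_eq_ind, if_neg hb, zero_mul]

lemma summable_chiV_x (p : ℝ) (u v : ℤ × ℤ) :
    Summable (fun x : ℤ × ℤ => chiV u x v * Kk p v) := by
  apply summable_of_ne_finset_zero (s := TV u v)
  intro b hb
  rw [chiV_eq_ind, if_neg hb, zero_mul]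

lemma loadH {p : ℝ} (hp : 4 < p) (u : ℤ × ℤ) :
    Summable (fun z : (ℤ × ℤ) × (ℤ × ℤ) => chiH u z.1 z.2 * Kk p z.2) ∧
    ∑' z : (ℤ × ℤ) × (ℤ × ℤ), chiH u z.1 z.2 * Kk p z.2 = 2 * Jcrit p := by
  set G : (ℤ × ℤ) × (ℤ × ℤ) → ℝ := fun w => chiH u w.2 w.1 * Kk p w.1 with hG
  have hGnn : 0 ≤ G := fun w => mul_nonneg (chiH_nonneg _ _ _) (Kk_nonneg _ _)
  have hinner : ∀ v : ℤ × ℤ, Summable (fun x => G (v, x)) := fun v => summable_chiH_x p u v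
  have hinval : ∀ v : ℤ × ℤ, ∑' x : ℤ × ℤ, G (v, x) = |(v.1:ℝ)| * Kk p v := by
    intro v
    rw [show (fun x : ℤ × ℤ => G (v, x)) = fun x => chiH u x v * Kk p v from rfl,
      tsum_mul_right, tsum_chiH]
  have houter : Summable (fun v : ℤ × ℤ => ∑' x : ℤ × ℤ, G (v, x)) := by
    apply Summable.congr (summable_abs1K hp)
    intro v
    exact (hinval v).symm
  have hGsum : Summable G := (summable_prod_of_nonneg hGnn).mpr ⟨hinner, houter⟩
  have hGt : ∑' w, G w = 2 * Jcrit p := by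
    rw [Summable.tsum_prod hGsum]
    calc ∑' (v : ℤ × ℤ) (x : ℤ × ℤ), G (v, x)
        = ∑' v : ℤ × ℤ, |(v.1:ℝ)| * Kk p v := tsum_congr hinval
      _ = 2 * Jcrit p := tsum_abs1K hp
  constructor
  · exact hGsum.prod_symm
  · rw [← hGt, ← (Equiv.prodComm (ℤ × ℤ) (ℤ × ℤ)).tsum_eq G]
    rfl

lemma loadV {p : ℝ} (hp : 4 < p) (u : ℤ × ℤ) :
    Summable (fun z : (ℤ × ℤ) × (ℤ × ℤ) => chiV u z.1 z.2 * Kk p z.2) ∧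
    ∑' z : (ℤ × ℤ) × (ℤ × ℤ), chiV u z.1 z.2 * Kk p z.2 = 2 * Jcrit p := by
  set G : (ℤ × ℤ) × (ℤ × ℤ) → ℝ := fun w => chiV u w.2 w.1 * Kk p w.1 with hG
  have hGnn : 0 ≤ G := fun w => mul_nonneg (chiV_nonneg _ _ _) (Kk_nonneg _ _)
  have hinner : ∀ v : ℤ × ℤ, Summable (fun x => G (v, x)) := fun v => summable_chiV_x p u v
  have hinval : ∀ v : ℤ × ℤ, ∑' x : ℤ × ℤ, G (v, x) = |(v.2:ℝ)| * Kk p v := by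
    intro v
    rw [show (fun x : ℤ × ℤ => G (v, x)) = fun x => chiV u x v * Kk p v from rfl,
      tsum_mul_right, tsum_chiV]
  have houter : Summable (fun v : ℤ × ℤ => ∑' x : ℤ × ℤ, G (v, x)) := by
    apply Summable.congr (summable_abs2K hp)
    intro v
    exact (hinval v).symm
  have hGsum : Summable G := (summable_prod_of_nonneg hGnn).mpr ⟨hinner, houter⟩
  have hGt : ∑' w, G w = 2 * Jcrit p := by
    rw [Summable.tsum_prod hGsum]
    calc ∑' (v : ℤ × ℤ) (x : ℤ × ℤ), G (v, x)
        = ∑' v : ℤ × ℤ, |(v.2:ℝ)| * Kk p v := tsum_congr hinval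
      _ = 2 * Jcrit p := tsum_abs2K hp
  constructor
  · exact hGsum.prod_symm
  · rw [← hGt, ← (Equiv.prodComm (ℤ × ℤ) (ℤ × ℤ)).tsum_eq G]
    rfl

end GSload2

noncomputable section GSsplit

lemma tsum_compl_eq (X : Finset (ℤ × ℤ)) (f : ℤ × ℤ → ℝ) :
    ∑' y : {y : ℤ × ℤ // y ∉ X}, f ↑y = ∑' y : ℤ × ℤ, if y ∉ X then f y else 0 := by
  rw [show (fun y : {y : ℤ × ℤ // y ∉ X} => f ↑y)
      = fun y : ({y : ℤ × ℤ | y ∉ X} : Set (ℤ × ℤ)) => f ↑y from rfl]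
  refine (tsum_subtype {y : ℤ × ℤ | y ∉ X} f).trans ?_
  apply tsum_congr
  intro y
  rw [Set.indicator_apply]
  by_cases h : y ∈ X
  · simp [h]
  · simp [h]

lemma per_x_split (X : Finset (ℤ × ℤ)) (f : ℤ × ℤ → ℝ) (hf : Summable f) :
    ∑' y : ℤ × ℤ, f y = ∑ y ∈ X, f y + ∑' y : {y : ℤ × ℤ // y ∉ X}, f ↑y := by
  have h := Summable.sum_add_tsum_compl (s := X) hf
  rw [← h]
  congr 1

lemma sym_split (X : Finset (ℤ × ℤ)) (F : (ℤ × ℤ) × (ℤ × ℤ) → ℝ)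
    (hsum : Summable F) (hnn : ∀ z, 0 ≤ F z)
    (hsym : ∀ x y, F (x, y) = F (y, x))
    (h0 : ∀ x y, x ∉ X → y ∉ X → F (x, y) = 0) :
    ∑' z, F z = ∑ x ∈ X, ∑' y : ℤ × ℤ, F (x, y)
      + ∑ x ∈ X, ∑' y : {y : ℤ × ℤ // y ∉ X}, F (x, ↑y) := by
  set F1 : (ℤ × ℤ) × (ℤ × ℤ) → ℝ := fun z => if z.1 ∈ X then F z else 0 with hF1
  set F2 : (ℤ × ℤ) × (ℤ × ℤ) → ℝ := fun z => if z.1 ∉ X then F z else 0 with hF2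
  have hs1 : Summable F1 := by
    apply Summable.of_nonneg_of_le (fun z => ?_) (fun z => ?_) hsum
    · simp only [hF1]; split
      · exact hnn z
      · exact le_refl 0
    · simp only [hF1]; split
      · exact le_refl _
      · exact hnn z
  have hs2 : Summable F2 := by
    apply Summable.of_nonneg_of_le (fun z => ?_) (fun z => ?_) hsum
    · simp only [hF2]; split
      · exact hnn z
      · exact le_refl 0
    · simp only [hF2]; split
      · exact le_refl _
      · exact hnn z
  have hdec : ∀ z, F z = F1 z + F2 z := by
    intro z
    simp only [hF1, hF2]
    by_cases h : z.1 ∈ X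
    · rw [if_pos h, if_neg (by simpa using h)]; ring
    · rw [if_neg h, if_pos h]; ring
  have hT1 : ∑' z, F1 z = ∑ x ∈ X, ∑' y : ℤ × ℤ, F (x, y) := by
    rw [Summable.tsum_prod hs1]
    rw [tsum_eq_sum (s := X) (f := fun x => ∑' y : ℤ × ℤ, F1 (x, y)) ?hvanish]
    · apply Finset.sum_congr rfl
      intro x hx
      apply tsum_congr
      intro y
      simp only [hF1]
      rw [if_pos hx]
    · intro x hx
      have : (fun y : ℤ × ℤ => F1 (x, y)) = fun _ => 0 := by
        funext y; simp only [hF1]; rw [if_neg hx]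
      show (∑' y : ℤ × ℤ, F1 (x, y)) = 0
      rw [this, tsum_zero]
  have hT2 : ∑' z, F2 z = ∑ x ∈ X, ∑' y : {y : ℤ × ℤ // y ∉ X}, F (x, ↑y) := by
    have hswap : ∑' z, F2 z = ∑' z : (ℤ × ℤ) × (ℤ × ℤ), F2 (z.2, z.1) := by
      rw [← (Equiv.prodComm (ℤ × ℤ) (ℤ × ℤ)).tsum_eq F2]
      rfl
    have hs2' : Summable (fun z : (ℤ × ℤ) × (ℤ × ℤ) => F2 (z.2, z.1)) := hs2.prod_symm
    rw [hswap, Summable.tsum_prod hs2']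
    rw [tsum_eq_sum (s := X) (f := fun x => ∑' y : ℤ × ℤ, F2 (y, x)) ?hvan2]
    · apply Finset.sum_congr rfl
      intro x hx
      rw [tsum_compl_eq X (fun y => F (x, y))]
      apply tsum_congr
      intro y
      simp only [hF2]
      by_cases hy : y ∈ X
      · rw [if_neg (by simpa using hy), if_neg (by simpa using hy)]
      · rw [if_pos hy, if_pos hy, hsym]
    · intro x hx
      have : (fun y : ℤ × ℤ => F2 (y, x)) = fun _ => 0 := by
        funext y
        simp only [hF2]
        by_cases hy : y ∈ X
        · rw [if_neg (by simpa using hy)]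
        · rw [if_pos hy]
          exact h0 y x hy hx
      show (∑' y : ℤ × ℤ, F2 (y, x)) = 0
      rw [this, tsum_zero]
  calc ∑' z, F z = ∑' z, (F1 z + F2 z) := tsum_congr hdec
    _ = ∑' z, F1 z + ∑' z, F2 z := Summable.tsum_add hs1 hs2
    _ = _ := by rw [hT1, hT2]

end GSsplit

noncomputable section GSmain

variable (X : Finset (ℤ × ℤ)) (σ : ℤ × ℤ → ℤ)

def tC (x : ℤ × ℤ) : ℝ := if x ∈ X then (σ x : ℝ) else 1

def g1 (u : ℤ × ℤ) : ℝ := 1 - tC X σ u * tC X σ (u + (1,0))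
def g2 (u : ℤ × ℤ) : ℝ := 1 - tC X σ u * tC X σ (u + (0,1))

def S1 : Finset (ℤ × ℤ) := X ∪ X.image (· - ((1,0) : ℤ × ℤ))
def S2 : Finset (ℤ × ℤ) := X ∪ X.image (· - ((0,1) : ℤ × ℤ))

def NX : Finset (ℤ × ℤ) :=
  X ∪ X.image (· + ((1,0) : ℤ × ℤ)) ∪ X.image (· - ((1,0) : ℤ × ℤ))
    ∪ X.image (· + ((0,1) : ℤ × ℤ)) ∪ X.image (· - ((0,1) : ℤ × ℤ))

def FnnF (z : (ℤ × ℤ) × (ℤ × ℤ)) : ℝ :=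
  if zNorm (z.1 - z.2) = 1 then 1 - tC X σ z.1 * tC X σ z.2 else 0

def FlrF (p : ℝ) (z : (ℤ × ℤ) × (ℤ × ℤ)) : ℝ :=
  (1 - tC X σ z.1 * tC X σ z.2) * Kk p (z.1 - z.2)

lemma tC_pm (hσ : ∀ x, σ x = 1 ∨ σ x = -1) : ∀ x, tC X σ x = 1 ∨ tC X σ x = -1 := by
  intro x
  unfold tC
  split
  · rcases hσ x with h | h <;> rw [h] <;> [left; right] <;> norm_num
  · left; rfl

lemma one_sub_tt_nonneg (hσ : ∀ x, σ x = 1 ∨ σ x = -1) :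
    ∀ x y, 0 ≤ 1 - tC X σ x * tC X σ y := by
  intro x y
  rcases tC_pm X σ hσ x with h | h <;> rcases tC_pm X σ hσ y with h' | h' <;>
    rw [h, h'] <;> norm_num

lemma tC_one_of_not_mem {x : ℤ × ℤ} (hx : x ∉ X) : tC X σ x = 1 := if_neg hx

lemma g1_nonneg (hσ : ∀ x, σ x = 1 ∨ σ x = -1) : ∀ u, 0 ≤ g1 X σ u :=
  fun u => one_sub_tt_nonneg X σ hσ u _
lemma g2_nonneg (hσ : ∀ x, σ x = 1 ∨ σ x = -1) : ∀ u, 0 ≤ g2 X σ u :=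
  fun u => one_sub_tt_nonneg X σ hσ u _

lemma g1_off {u : ℤ × ℤ} (hu : u ∉ S1 X) : g1 X σ u = 0 := by
  unfold S1 at hu
  rw [Finset.mem_union] at hu
  push_neg at hu
  have h2 : u + (1,0) ∉ X := by
    intro hmem
    exact hu.2 (Finset.mem_image.mpr ⟨u + (1,0), hmem, by abel⟩)
  unfold g1
  rw [tC_one_of_not_mem X σ hu.1, tC_one_of_not_mem X σ h2]
  ring

lemma g2_off {u : ℤ × ℤ} (hu : u ∉ S2 X) : g2 X σ u = 0 := by
  unfold S2 at hu
  rw [Finset.mem_union] at hu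
  push_neg at hu
  have h2 : u + (0,1) ∉ X := by
    intro hmem
    exact hu.2 (Finset.mem_image.mpr ⟨u + (0,1), hmem, by abel⟩)
  unfold g2
  rw [tC_one_of_not_mem X σ hu.1, tC_one_of_not_mem X σ h2]
  ring

lemma FnnF_nonneg (hσ : ∀ x, σ x = 1 ∨ σ x = -1) : ∀ z, 0 ≤ FnnF X σ z := by
  intro z
  unfold FnnF
  split
  · exact one_sub_tt_nonneg X σ hσ _ _
  · exact le_refl 0

lemma FlrF_nonneg (hσ : ∀ x, σ x = 1 ∨ σ x = -1) (p : ℝ) : ∀ z, 0 ≤ FlrF X σ p z := fun z =>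
  mul_nonneg (one_sub_tt_nonneg X σ hσ _ _) (Kk_nonneg p _)

lemma FnnF_symm : ∀ x y, FnnF X σ (x, y) = FnnF X σ (y, x) := by
  intro x y
  unfold FnnF
  have h : zNorm (x - y) = zNorm (y - x) := by
    unfold zNorm
    rw [show ((x - y : ℤ × ℤ)) = -(y - x) from by abel]
    simp only [Prod.fst_neg, Prod.snd_neg, Int.cast_neg, neg_sq]
  simp only [h, mul_comm (tC X σ x)]

lemma FlrF_symm (p : ℝ) : ∀ x y, FlrF X σ p (x, y) = FlrF X σ p (y, x) := by
  intro x y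
  unfold FlrF
  simp only
  rw [show (x - y : ℤ × ℤ) = -(y - x) from by abel, Kk_neg, mul_comm (tC X σ x)]

lemma FnnF_vanish : ∀ x y, x ∉ X → y ∉ X → FnnF X σ (x, y) = 0 := by
  intro x y hx hy
  unfold FnnF
  simp only
  rw [tC_one_of_not_mem X σ hx, tC_one_of_not_mem X σ hy]
  simp

lemma FlrF_vanish (p : ℝ) : ∀ x y, x ∉ X → y ∉ X → FlrF X σ p (x, y) = 0 := by
  intro x y hx hy
  unfold FlrF
  simp only
  rw [tC_one_of_not_mem X σ hx, tC_one_of_not_mem X σ hy]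
  simp

lemma mem_NX_self {w : ℤ × ℤ} (hw : w ∈ X) : w ∈ NX X := by
  unfold NX; simp only [Finset.mem_union]; tauto

lemma mem_NX_addx {w : ℤ × ℤ} (hw : w ∈ X) : w + (1,0) ∈ NX X := by
  unfold NX; simp only [Finset.mem_union]
  exact Or.inl (Or.inl (Or.inl (Or.inr (Finset.mem_image_of_mem _ hw))))

lemma mem_NX_subx {w : ℤ × ℤ} (hw : w ∈ X) : w - (1,0) ∈ NX X := by
  unfold NX; simp only [Finset.mem_union]
  exact Or.inl (Or.inl (Or.inr (Finset.mem_image_of_mem _ hw)))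

lemma mem_NX_addy {w : ℤ × ℤ} (hw : w ∈ X) : w + (0,1) ∈ NX X := by
  unfold NX; simp only [Finset.mem_union]
  exact Or.inl (Or.inr (Finset.mem_image_of_mem _ hw))

lemma mem_NX_suby {w : ℤ × ℤ} (hw : w ∈ X) : w - (0,1) ∈ NX X := by
  unfold NX; simp only [Finset.mem_union]
  exact Or.inr (Finset.mem_image_of_mem _ hw)

lemma FnnF_off {z : (ℤ × ℤ) × (ℤ × ℤ)} (hz : z ∉ (NX X) ×ˢ (NX X)) : FnnF X σ z = 0 := by
  by_contra hne
  apply hz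
  have h1 : zNorm (z.1 - z.2) = 1 := by
    by_contra h
    exact hne (by unfold FnnF; rw [if_neg h])
  have h2 : 1 - tC X σ z.1 * tC X σ z.2 ≠ 0 := by
    intro h
    exact hne (by unfold FnnF; rw [if_pos h1, h])
  have hmem : z.1 ∈ X ∨ z.2 ∈ X := by
    by_contra h
    push_neg at h
    rw [tC_one_of_not_mem X σ h.1, tC_one_of_not_mem X σ h.2] at h2
    exact h2 (by ring)
  have hv := (zNorm_eq_one_iff (z.1 - z.2)).mp h1
  rw [Finset.mem_product]
  rcases hv with h | h | h | h <;>
    [ (have e1 : z.1 = z.2 + (1,0) := by rw [show ((1,0) : ℤ×ℤ) = z.1 - z.2 from h.symm]; abel;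
       have e2 : z.2 = z.1 - (1,0) := by rw [show ((1,0) : ℤ×ℤ) = z.1 - z.2 from h.symm]; abel);
      (have e1 : z.1 = z.2 - (1,0) := by rw [show ((1,0) : ℤ×ℤ) = -(z.1 - z.2) from by rw [h]; abel]; abel;
       have e2 : z.2 = z.1 + (1,0) := by rw [show ((1,0) : ℤ×ℤ) = -(z.1 - z.2) from by rw [h]; abel]; abel);
      (have e1 : z.1 = z.2 + (0,1) := by rw [show ((0,1) : ℤ×ℤ) = z.1 - z.2 from h.symm]; abel;
       have e2 : z.2 = z.1 - (0,1) := by rw [show ((0,1) : ℤ×ℤ) = z.1 - z.2 from h.symm]; abel);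
      (have e1 : z.1 = z.2 - (0,1) := by rw [show ((0,1) : ℤ×ℤ) = -(z.1 - z.2) from by rw [h]; abel]; abel;
       have e2 : z.2 = z.1 + (0,1) := by rw [show ((0,1) : ℤ×ℤ) = -(z.1 - z.2) from by rw [h]; abel]; abel)] <;>
    rcases hmem with hm | hm
  · exact ⟨mem_NX_self X hm, e2 ▸ mem_NX_subx X hm⟩
  · exact ⟨e1 ▸ mem_NX_addx X hm, mem_NX_self X hm⟩
  · exact ⟨mem_NX_self X hm, e2 ▸ mem_NX_addx X hm⟩
  · exact ⟨e1 ▸ mem_NX_subx X hm, mem_NX_self X hm⟩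
  · exact ⟨mem_NX_self X hm, e2 ▸ mem_NX_suby X hm⟩
  · exact ⟨e1 ▸ mem_NX_addy X hm, mem_NX_self X hm⟩
  · exact ⟨mem_NX_self X hm, e2 ▸ mem_NX_addy X hm⟩
  · exact ⟨e1 ▸ mem_NX_suby X hm, mem_NX_self X hm⟩

lemma FnnF_summable : Summable (FnnF X σ) :=
  summable_of_ne_finset_zero (s := (NX X) ×ˢ (NX X)) (fun z hz => FnnF_off X σ hz)

end GSmain

noncomputable section GScore

lemma zNorm_neg (v : ℤ × ℤ) : zNorm (-v) = zNorm v := by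
  unfold zNorm
  simp only [Prod.fst_neg, Prod.snd_neg, Int.cast_neg, neg_sq]

variable (X : Finset (ℤ × ℤ)) (σ : ℤ × ℤ → ℤ)

def Lxv (p : ℝ) (z : (ℤ × ℤ) × (ℤ × ℤ)) : ℝ :=
  (1 - tC X σ z.1 * tC X σ (z.1 + z.2)) * Kk p z.2

def Rxv (p : ℝ) (z : (ℤ × ℤ) × (ℤ × ℤ)) : ℝ :=
  (∑ u ∈ S1 X, g1 X σ u * (chiH u z.1 z.2 * Kk p z.2))
  + ∑ u ∈ S2 X, g2 X σ u * (chiV u z.1 z.2 * Kk p z.2)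

def eSh : ((ℤ × ℤ) × (ℤ × ℤ)) ≃ ((ℤ × ℤ) × (ℤ × ℤ)) where
  toFun z := (z.1, z.1 + z.2)
  invFun z := (z.1, z.2 - z.1)
  left_inv z := by simp
  right_inv z := by simp

lemma FlrF_eSh (p : ℝ) (z : (ℤ × ℤ) × (ℤ × ℤ)) :
    FlrF X σ p (eSh z) = Lxv X σ p z := by
  unfold FlrF Lxv eSh
  simp only [Equiv.coe_fn_mk]
  rw [show z.1 - (z.1 + z.2) = -z.2 from by abel, Kk_neg]

lemma FnnF_eSh (z : (ℤ × ℤ) × (ℤ × ℤ)) :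
    FnnF X σ (eSh z) = if zNorm z.2 = 1 then 1 - tC X σ z.1 * tC X σ (z.1 + z.2) else 0 := by
  unfold FnnF eSh
  simp only [Equiv.coe_fn_mk]
  rw [show z.1 - (z.1 + z.2) = -z.2 from by abel, zNorm_neg]

lemma seg1_eq (hσ : ∀ x, σ x = 1 ∨ σ x = -1) (x v : ℤ × ℤ) :
    ∑ s ∈ Finset.Ico (min x.1 (x.1+v.1)) (max x.1 (x.1+v.1)),
      (1 - tC X σ (s, x.2) * tC X σ (s+1, x.2))
    = ∑ u ∈ S1 X, g1 X σ u * chiH u x v := by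
  set m := min x.1 (x.1+v.1)
  set M := max x.1 (x.1+v.1)
  set T : Finset (ℤ × ℤ) := (Finset.Ico m M).image (fun s => (s, x.2)) with hT
  have hinj : Set.InjOn (fun s : ℤ => (s, x.2)) (Finset.Ico m M) := by
    intro a _ b _ hab
    exact (Prod.ext_iff.mp hab).1
  have hmemT : ∀ u : ℤ × ℤ, u ∈ T ↔ (u.2 = x.2 ∧ m ≤ u.1 ∧ u.1 < M) := by
    intro u
    rw [hT, Finset.mem_image]
    constructor
    · rintro ⟨s, hs, rfl⟩
      rw [Finset.mem_Ico] at hs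
      exact ⟨rfl, hs.1, hs.2⟩
    · rintro ⟨h1, h2, h3⟩
      exact ⟨u.1, Finset.mem_Ico.mpr ⟨h2, h3⟩, by rw [← h1]⟩
  have step1 : ∑ s ∈ Finset.Ico m M, (1 - tC X σ (s, x.2) * tC X σ (s+1, x.2))
      = ∑ u ∈ T, g1 X σ u := by
    rw [hT, Finset.sum_image hinj]
    apply Finset.sum_congr rfl
    intro s _
    unfold g1
    congr 2
    simp [Prod.ext_iff]
  have step2 : ∀ u, chiH u x v = if u ∈ T then (1:ℝ) else 0 := by
    intro u
    unfold chiH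
    exact if_congr (hmemT u).symm rfl rfl
  rw [step1]
  calc ∑ u ∈ T, g1 X σ u
      = ∑ u ∈ S1 X ∩ T, g1 X σ u := by
        symm
        apply Finset.sum_subset (Finset.inter_subset_right)
        intro u huT hun
        apply g1_off
        intro huS
        exact hun (Finset.mem_inter.mpr ⟨huS, huT⟩)
    _ = ∑ u ∈ S1 X, (if u ∈ T then g1 X σ u else 0) := (Finset.sum_ite_mem _ _ _).symm
    _ = ∑ u ∈ S1 X, g1 X σ u * chiH u x v := by
        apply Finset.sum_congr rfl
        intro u _
        rw [step2 u]
        split <;> simp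

lemma seg2_eq (hσ : ∀ x, σ x = 1 ∨ σ x = -1) (x v : ℤ × ℤ) :
    ∑ s ∈ Finset.Ico (min x.2 (x.2+v.2)) (max x.2 (x.2+v.2)),
      (1 - tC X σ (x.1+v.1, s) * tC X σ (x.1+v.1, s+1))
    = ∑ u ∈ S2 X, g2 X σ u * chiV u x v := by
  set m := min x.2 (x.2+v.2)
  set M := max x.2 (x.2+v.2)
  set T : Finset (ℤ × ℤ) := (Finset.Ico m M).image (fun s => (x.1+v.1, s)) with hT
  have hinj : Set.InjOn (fun s : ℤ => (x.1+v.1, s)) (Finset.Ico m M) := by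
    intro a _ b _ hab
    exact (Prod.ext_iff.mp hab).2
  have hmemT : ∀ u : ℤ × ℤ, u ∈ T ↔ (u.1 = x.1+v.1 ∧ m ≤ u.2 ∧ u.2 < M) := by
    intro u
    rw [hT, Finset.mem_image]
    constructor
    · rintro ⟨s, hs, rfl⟩
      rw [Finset.mem_Ico] at hs
      exact ⟨rfl, hs.1, hs.2⟩
    · rintro ⟨h1, h2, h3⟩
      exact ⟨u.2, Finset.mem_Ico.mpr ⟨h2, h3⟩, by rw [← h1]⟩
  have step1 : ∑ s ∈ Finset.Ico m M, (1 - tC X σ (x.1+v.1, s) * tC X σ (x.1+v.1, s+1))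
      = ∑ u ∈ T, g2 X σ u := by
    rw [hT, Finset.sum_image hinj]
    apply Finset.sum_congr rfl
    intro s _
    unfold g2
    congr 2
    simp [Prod.ext_iff]
  have step2 : ∀ u, chiV u x v = if u ∈ T then (1:ℝ) else 0 := by
    intro u
    unfold chiV
    exact if_congr (hmemT u).symm rfl rfl
  rw [step1]
  calc ∑ u ∈ T, g2 X σ u
      = ∑ u ∈ S2 X ∩ T, g2 X σ u := by
        symm
        apply Finset.sum_subset (Finset.inter_subset_right)
        intro u huT hun
        apply g2_off
        intro huS
        exact hun (Finset.mem_inter.mpr ⟨huS, huT⟩)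
    _ = ∑ u ∈ S2 X, (if u ∈ T then g2 X σ u else 0) := (Finset.sum_ite_mem _ _ _).symm
    _ = ∑ u ∈ S2 X, g2 X σ u * chiV u x v := by
        apply Finset.sum_congr rfl
        intro u _
        rw [step2 u]
        split <;> simp

lemma Lxv_le_Rxv (p : ℝ) (hσ : ∀ x, σ x = 1 ∨ σ x = -1) (z : (ℤ × ℤ) × (ℤ × ℤ)) :
    Lxv X σ p z ≤ Rxv X σ p z := by
  obtain ⟨x, v⟩ := z
  have hkey := key2 (tC X σ) (tC_pm X σ hσ) x v
  have hK := Kk_nonneg p v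
  have h := mul_le_mul_of_nonneg_right hkey hK
  unfold Lxv Rxv
  simp only at h ⊢
  rw [add_mul] at h
  rw [seg1_eq X σ hσ x v, seg2_eq X σ hσ x v, Finset.sum_mul, Finset.sum_mul] at h
  simp only [mul_assoc] at h
  exact h

end GScore

noncomputable section GSfinal

variable (X : Finset (ℤ × ℤ)) (σ : ℤ × ℤ → ℤ)

lemma Rxv_summable {p : ℝ} (hp : 4 < p) : Summable (Rxv X σ p) := by
  apply Summable.add
  · apply summable_sum
    intro u _
    exact ((loadH hp u).1).mul_left (g1 X σ u)
  · apply summable_sum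
    intro u _
    exact ((loadV hp u).1).mul_left (g2 X σ u)

lemma Lxv_nonneg (p : ℝ) (hσ : ∀ x, σ x = 1 ∨ σ x = -1) : ∀ z, 0 ≤ Lxv X σ p z :=
  fun z => mul_nonneg (one_sub_tt_nonneg X σ hσ _ _) (Kk_nonneg p _)

lemma Lxv_summable {p : ℝ} (hp : 4 < p) (hσ : ∀ x, σ x = 1 ∨ σ x = -1) :
    Summable (Lxv X σ p) :=
  Summable.of_nonneg_of_le (Lxv_nonneg X σ p hσ) (Lxv_le_Rxv X σ p hσ) (Rxv_summable X σ hp)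

lemma FlrF_summable {p : ℝ} (hp : 4 < p) (hσ : ∀ x, σ x = 1 ∨ σ x = -1) :
    Summable (FlrF X σ p) := by
  rw [← (eSh).summable_iff]
  apply (Lxv_summable X σ hp hσ).congr
  intro z
  exact (FlrF_eSh X σ p z).symm

lemma tsum_FlrF_eq_Lxv (p : ℝ) : ∑' z, FlrF X σ p z = ∑' z, Lxv X σ p z := by
  rw [← (eSh).tsum_eq (FlrF X σ p)]
  exact tsum_congr (fun z => FlrF_eSh X σ p z)

lemma tsum_Rxv {p : ℝ} (hp : 4 < p) :
    ∑' z, Rxv X σ p z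
      = (∑ u ∈ S1 X, g1 X σ u) * (2 * Jcrit p) + (∑ u ∈ S2 X, g2 X σ u) * (2 * Jcrit p) := by
  unfold Rxv
  rw [Summable.tsum_add
    (summable_sum (fun u _ => ((loadH hp u).1).mul_left (g1 X σ u)))
    (summable_sum (fun u _ => ((loadV hp u).1).mul_left (g2 X σ u)))]
  congr 1
  · rw [Summable.tsum_finsetSum (fun u _ => ((loadH hp u).1).mul_left (g1 X σ u))]
    rw [Finset.sum_mul]
    apply Finset.sum_congr rfl
    intro u _
    rw [tsum_mul_left, (loadH hp u).2]
  · rw [Summable.tsum_finsetSum (fun u _ => ((loadV hp u).1).mul_left (g2 X σ u))]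
    rw [Finset.sum_mul]
    apply Finset.sum_congr rfl
    intro u _
    rw [tsum_mul_left, (loadV hp u).2]

def D4 : Finset (ℤ × ℤ) := {(1,0), (-1,0), (0,1), (0,-1)}

lemma tsum_FnnF_eq (hσ : ∀ x, σ x = 1 ∨ σ x = -1) :
    ∑' z, FnnF X σ z = 2 * ((∑ u ∈ S1 X, g1 X σ u) + ∑ u ∈ S2 X, g2 X σ u) := by
  have hsum : Summable (FnnF X σ) := FnnF_summable X σ
  have hsum2 : Summable (fun z => FnnF X σ (eSh z)) := by
    exact (eSh).summable_iff.mpr hsum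
  -- W with v first
  set W : (ℤ × ℤ) × (ℤ × ℤ) → ℝ :=
    fun w => if zNorm w.1 = 1 then 1 - tC X σ w.2 * tC X σ (w.2 + w.1) else 0 with hW
  have hWsum : Summable W := by
    have := hsum2.prod_symm
    apply this.congr
    intro w
    rw [FnnF_eSh]
    rfl
  have h1 : ∑' z, FnnF X σ z = ∑' w, W w := by
    rw [← (eSh).tsum_eq (FnnF X σ)]
    rw [← (Equiv.prodComm (ℤ × ℤ) (ℤ × ℤ)).tsum_eq W]
    apply tsum_congr
    intro z
    rw [FnnF_eSh]
    rfl
  rw [h1, Summable.tsum_prod hWsum]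
  have hinner : ∀ v : ℤ × ℤ, ∑' x : ℤ × ℤ, W (v, x)
      = if zNorm v = 1 then (∑' x : ℤ × ℤ, (1 - tC X σ x * tC X σ (x + v))) else 0 := by
    intro v
    by_cases h : zNorm v = 1
    · rw [if_pos h]
      apply tsum_congr
      intro x
      simp only [hW]
      rw [if_pos h]
    · rw [if_neg h]
      have : (fun x : ℤ × ℤ => W (v, x)) = fun _ => 0 := by
        funext x
        simp only [hW]
        rw [if_neg h]
      rw [this, tsum_zero]
  rw [tsum_congr hinner]
  rw [tsum_eq_sum (s := D4) ?hoff]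
  case hoff =>
    intro v hv
    rw [if_neg]
    intro h1
    apply hv
    unfold D4
    rcases (zNorm_eq_one_iff v).mp h1 with h | h | h | h <;> rw [h] <;>
      simp [Finset.mem_insert]
  have hm1 : zNorm ((1,0) : ℤ × ℤ) = 1 := by
    rw [zNorm_eq_one_iff]; tauto
  have hm2 : zNorm ((-1,0) : ℤ × ℤ) = 1 := by
    rw [zNorm_eq_one_iff]; tauto
  have hm3 : zNorm ((0,1) : ℤ × ℤ) = 1 := by
    rw [zNorm_eq_one_iff]; tauto
  have hm4 : zNorm ((0,-1) : ℤ × ℤ) = 1 := by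
    rw [zNorm_eq_one_iff]; tauto
  have hD : D4 = {((1,0) : ℤ×ℤ), (-1,0), (0,1), (0,-1)} := rfl
  have e1 : ∑' x : ℤ × ℤ, (1 - tC X σ x * tC X σ (x + (1,0))) = ∑ u ∈ S1 X, g1 X σ u := by
    apply tsum_eq_sum
    intro u hu
    exact g1_off X σ hu
  have e2 : ∑' x : ℤ × ℤ, (1 - tC X σ x * tC X σ (x + (0,1))) = ∑ u ∈ S2 X, g2 X σ u := by
    apply tsum_eq_sum
    intro u hu
    exact g2_off X σ hu
  have e1' : ∑' x : ℤ × ℤ, (1 - tC X σ x * tC X σ (x + (-1,0))) = ∑ u ∈ S1 X, g1 X σ u := by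
    rw [← (Equiv.addRight ((1,0) : ℤ × ℤ)).tsum_eq
      (fun x : ℤ × ℤ => 1 - tC X σ x * tC X σ (x + (-1,0)))]
    rw [← e1]
    apply tsum_congr
    intro x
    simp only [Equiv.coe_addRight]
    rw [show x + (1,0) + (-1,0) = x from by abel, mul_comm]
  have e2' : ∑' x : ℤ × ℤ, (1 - tC X σ x * tC X σ (x + (0,-1))) = ∑ u ∈ S2 X, g2 X σ u := by
    rw [← (Equiv.addRight ((0,1) : ℤ × ℤ)).tsum_eq
      (fun x : ℤ × ℤ => 1 - tC X σ x * tC X σ (x + (0,-1)))]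
    rw [← e2]
    apply tsum_congr
    intro x
    simp only [Equiv.coe_addRight]
    rw [show x + (0,1) + (0,-1) = x from by abel, mul_comm]
  rw [hD]
  rw [Finset.sum_insert (by decide), Finset.sum_insert (by decide),
    Finset.sum_insert (by decide), Finset.sum_singleton]
  rw [if_pos hm1, if_pos hm2, if_pos hm3, if_pos hm4, e1, e1', e2, e2']
  ring

lemma core_ineq {p : ℝ} (hp : 4 < p) (hσ : ∀ x, σ x = 1 ∨ σ x = -1) :
    ∑' z, FlrF X σ p z ≤ Jcrit p * ∑' z, FnnF X σ z := by
  rw [tsum_FlrF_eq_Lxv, tsum_FnnF_eq X σ hσ]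
  calc ∑' z, Lxv X σ p z ≤ ∑' z, Rxv X σ p z :=
        Summable.tsum_le_tsum (Lxv_le_Rxv X σ p hσ) (Lxv_summable X σ hp hσ) (Rxv_summable X σ hp)
    _ = (∑ u ∈ S1 X, g1 X σ u) * (2 * Jcrit p) + (∑ u ∈ S2 X, g2 X σ u) * (2 * Jcrit p) :=
        tsum_Rxv X σ hp
    _ = Jcrit p * (2 * ((∑ u ∈ S1 X, g1 X σ u) + ∑ u ∈ S2 X, g2 X σ u)) := by ring

end GSfinal

section GSenergy

variable (X : Finset (ℤ × ℤ)) (σ : ℤ × ℤ → ℤ)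

lemma tC_mem {x : ℤ × ℤ} (hx : x ∈ X) : tC X σ x = (σ x : ℝ) := if_pos hx

lemma conv_nn (hx : ∀ x ∈ X, True) : ∀ x ∈ X, ∀ y ∈ X,
    (if zNorm (x - y) = 1 then ((σ x * σ y : ℤ) : ℝ) - 1 else 0) = -(FnnF X σ (x, y)) := by
  intro x hx' y hy
  unfold FnnF
  simp only
  rw [tC_mem X σ hx', tC_mem X σ hy]
  by_cases h : zNorm (x - y) = 1
  · rw [if_pos h, if_pos h]
    push_cast
    ring
  · rw [if_neg h, if_neg h]
    ring

lemma conv_lr (p : ℝ) : ∀ x ∈ X, ∀ y ∈ X,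
    (if x = y then 0 else (((σ x * σ y : ℤ) : ℝ) - 1) / zNorm (x - y) ^ p)
      = -(FlrF X σ p (x, y)) := by
  intro x hx y hy
  unfold FlrF
  simp only
  rw [tC_mem X σ hx, tC_mem X σ hy]
  by_cases h : x = y
  · rw [if_pos h, h]
    rw [show (y - y : ℤ × ℤ) = 0 from by abel]
    unfold Kk
    rw [if_pos rfl]
    ring
  · rw [if_neg h]
    have hxy : (x - y : ℤ × ℤ) ≠ 0 := sub_ne_zero.mpr h
    unfold Kk
    rw [if_neg hxy, zNorm_pow]
    push_cast
    ring

lemma conv_nnB : ∀ x ∈ X,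
    (∑' y : {y : ℤ × ℤ // y ∉ X},
      (if zNorm (x - (y : ℤ × ℤ)) = 1 then ((σ x * (1 : ℤ) : ℤ) : ℝ) - 1 else 0))
      = -(∑' y : {y : ℤ × ℤ // y ∉ X}, FnnF X σ (x, ↑y)) := by
  intro x hx
  rw [← tsum_neg]
  apply tsum_congr
  intro y
  unfold FnnF
  simp only
  rw [tC_mem X σ hx, tC_one_of_not_mem X σ y.2]
  by_cases h : zNorm (x - (y : ℤ × ℤ)) = 1
  · rw [if_pos h, if_pos h]
    push_cast
    ring
  · rw [if_neg h, if_neg h]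
    ring

lemma conv_lrB (p : ℝ) : ∀ x ∈ X,
    (∑' y : {y : ℤ × ℤ // y ∉ X},
      (((σ x * (1 : ℤ) : ℤ) : ℝ) - 1) / zNorm (x - (y : ℤ × ℤ)) ^ p)
      = -(∑' y : {y : ℤ × ℤ // y ∉ X}, FlrF X σ p (x, ↑y)) := by
  intro x hx
  rw [← tsum_neg]
  apply tsum_congr
  intro y
  unfold FlrF
  simp only
  rw [tC_mem X σ hx, tC_one_of_not_mem X σ y.2]
  have hne : x ≠ (y : ℤ × ℤ) := by
    intro h
    exact y.2 (h ▸ hx)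
  have hxy : (x - (y : ℤ × ℤ)) ≠ 0 := sub_ne_zero.mpr hne
  unfold Kk
  rw [if_neg hxy, zNorm_pow]
  push_cast
  ring

lemma energy_eq (p J : ℝ) :
    energyBC p J X σ (fun _ => 1)
      = J * ((1/2) * (∑ x ∈ X, ∑ y ∈ X, FnnF X σ (x, y))
          + ∑ x ∈ X, ∑' y : {y : ℤ × ℤ // y ∉ X}, FnnF X σ (x, ↑y))
        - ((1/2) * (∑ x ∈ X, ∑ y ∈ X, FlrF X σ p (x, y))
          + ∑ x ∈ X, ∑' y : {y : ℤ × ℤ // y ∉ X}, FlrF X σ p (x, ↑y)) := by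
  unfold energyBC
  have c1 : ∑ x ∈ X, ∑ y ∈ X, (if zNorm (x - y) = 1 then ((σ x * σ y : ℤ) : ℝ) - 1 else 0)
      = -∑ x ∈ X, ∑ y ∈ X, FnnF X σ (x, y) := by
    rw [← Finset.sum_neg_distrib]
    apply Finset.sum_congr rfl
    intro x hx
    rw [← Finset.sum_neg_distrib]
    exact Finset.sum_congr rfl (fun y hy => conv_nn X σ (fun _ _ => trivial) x hx y hy)
  have c2 : ∑ x ∈ X, ∑ y ∈ X,
      (if x = y then 0 else (((σ x * σ y : ℤ) : ℝ) - 1) / zNorm (x - y) ^ p)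
      = -∑ x ∈ X, ∑ y ∈ X, FlrF X σ p (x, y) := by
    rw [← Finset.sum_neg_distrib]
    apply Finset.sum_congr rfl
    intro x hx
    rw [← Finset.sum_neg_distrib]
    exact Finset.sum_congr rfl (fun y hy => conv_lr X σ p x hx y hy)
  have c3 : ∑ x ∈ X, (∑' y : {y : ℤ × ℤ // y ∉ X},
      (if zNorm (x - (y : ℤ × ℤ)) = 1 then ((σ x * (1:ℤ) : ℤ) : ℝ) - 1 else 0))
      = -∑ x ∈ X, ∑' y : {y : ℤ × ℤ // y ∉ X}, FnnF X σ (x, ↑y) := by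
    rw [← Finset.sum_neg_distrib]
    exact Finset.sum_congr rfl (fun x hx => conv_nnB X σ x hx)
  have c4 : ∑ x ∈ X, (∑' y : {y : ℤ × ℤ // y ∉ X},
      (((σ x * (1:ℤ) : ℤ) : ℝ) - 1) / zNorm (x - (y : ℤ × ℤ)) ^ p)
      = -∑ x ∈ X, ∑' y : {y : ℤ × ℤ // y ∉ X}, FlrF X σ p (x, ↑y) := by
    rw [← Finset.sum_neg_distrib]
    exact Finset.sum_congr rfl (fun x hx => conv_lrB X σ p x hx)
  rw [c1, c2, c3, c4]
  ring

lemma energy_plus_nonneg {p J : ℝ} (hp : 4 < p) (hJ : Jcrit p < J)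
    (hσ : ∀ x, σ x = 1 ∨ σ x = -1) :
    0 ≤ energyBC p J X σ (fun _ => 1) := by
  have hNNsum := FnnF_summable X σ
  have hLRsum := FlrF_summable X σ hp hσ
  set Nn := ∑' z, FnnF X σ z with hNndef
  set Lr := ∑' z, FlrF X σ p z with hLrdef
  set SXXnn := ∑ x ∈ X, ∑ y ∈ X, FnnF X σ (x, y) with hSXXnn
  set SBnn := ∑ x ∈ X, ∑' y : {y : ℤ × ℤ // y ∉ X}, FnnF X σ (x, ↑y) with hSBnn
  set SXXlr := ∑ x ∈ X, ∑ y ∈ X, FlrF X σ p (x, y) with hSXXlr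
  set SBlr := ∑ x ∈ X, ∑' y : {y : ℤ × ℤ // y ∉ X}, FlrF X σ p (x, ↑y) with hSBlr
  have split_nn := sym_split X (FnnF X σ) hNNsum (FnnF_nonneg X σ hσ)
    (FnnF_symm X σ) (FnnF_vanish X σ)
  have split_lr := sym_split X (FlrF X σ p) hLRsum (FlrF_nonneg X σ hσ p)
    (FlrF_symm X σ p) (FlrF_vanish X σ p)
  have hNn : Nn = SXXnn + 2 * SBnn := by
    rw [hNndef, split_nn, hSXXnn, hSBnn]
    have : ∑ x ∈ X, ∑' y : ℤ × ℤ, FnnF X σ (x, y)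
        = ∑ x ∈ X, (∑ y ∈ X, FnnF X σ (x, y)
            + ∑' y : {y : ℤ × ℤ // y ∉ X}, FnnF X σ (x, ↑y)) := by
      apply Finset.sum_congr rfl
      intro x _
      exact per_x_split X (fun y => FnnF X σ (x, y)) (hNNsum.prod_factor x)
    rw [this, Finset.sum_add_distrib]
    ring
  have hLr : Lr = SXXlr + 2 * SBlr := by
    rw [hLrdef, split_lr, hSXXlr, hSBlr]
    have : ∑ x ∈ X, ∑' y : ℤ × ℤ, FlrF X σ p (x, y)
        = ∑ x ∈ X, (∑ y ∈ X, FlrF X σ p (x, y)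
            + ∑' y : {y : ℤ × ℤ // y ∉ X}, FlrF X σ p (x, ↑y)) := by
      apply Finset.sum_congr rfl
      intro x _
      exact per_x_split X (fun y => FlrF X σ p (x, y)) (hLRsum.prod_factor x)
    rw [this, Finset.sum_add_distrib]
    ring
  have hE : energyBC p J X σ (fun _ => 1)
      = J * ((1/2) * SXXnn + SBnn) - ((1/2) * SXXlr + SBlr) := energy_eq X σ p J
  have hNnpos : 0 ≤ Nn := tsum_nonneg (FnnF_nonneg X σ hσ)
  have hcore : Lr ≤ Jcrit p * Nn := core_ineq X σ hp hσ
  rw [hE]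
  have h1 : (1/2) * SXXnn + SBnn = (1/2) * Nn := by rw [hNn]; ring
  have h2 : (1/2) * SXXlr + SBlr = (1/2) * Lr := by rw [hLr]; ring
  rw [h1, h2]
  nlinarith [hcore, hNnpos, hJ]

end GSenergy

lemma energy_const (p J : ℝ) (X : Finset (ℤ × ℤ)) (c : ℤ) (hc : c * c = 1) :
    energyBC p J X (fun _ => c) (fun _ => c) = 0 := by
  unfold energyBC
  have h : ((c * c : ℤ) : ℝ) - 1 = 0 := by rw [hc]; norm_num
  simp only [h, ite_self, zero_div, Finset.sum_const_zero, tsum_zero, mul_zero, add_zero,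
    sub_zero, neg_mul, zero_add, neg_zero]

lemma energy_neg_bc (p J : ℝ) (X : Finset (ℤ × ℤ)) (σ : ℤ × ℤ → ℤ) :
    energyBC p J X σ (fun _ => -1) = energyBC p J X (fun x => -σ x) (fun _ => 1) := by
  unfold energyBC
  simp only [mul_neg_one, mul_one, neg_mul_neg]

/-- for `p > 4` and `J > J_c`, the constant configurations `σ ≡ +1` and
`σ ≡ -1` are infinite volume ground states: for every finite `X` and every `±1`-valued
configuration, `H_X(σ_X | σ⁺) ≥ H_X(σ⁺_X | σ⁺) = 0` (and likewise for `σ⁻`). -/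
theorem constant_configurations_ground_states (p J : ℝ) (hp : 4 < p) (hJ : Jcrit p < J)
    (X : Finset (ℤ × ℤ)) (σ : ℤ × ℤ → ℤ) (hσ : ∀ x, σ x = 1 ∨ σ x = -1) :
    (energyBC p J X σ (fun _ => 1) ≥ energyBC p J X (fun _ => 1) (fun _ => 1) ∧
      energyBC p J X (fun _ => 1) (fun _ => 1) = 0) ∧
    (energyBC p J X σ (fun _ => -1) ≥ energyBC p J X (fun _ => -1) (fun _ => -1) ∧
      energyBC p J X (fun _ => -1) (fun _ => -1) = 0) := by
  have hσ' : ∀ x, (fun x => -σ x) x = 1 ∨ (fun x => -σ x) x = -1 := by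
    intro x
    rcases hσ x with h | h
    · right; simp [h]
    · left; simp [h]
  refine ⟨⟨?_, energy_const p J X 1 (by norm_num)⟩,
    ⟨?_, energy_const p J X (-1) (by norm_num)⟩⟩
  · rw [energy_const p J X 1 (by norm_num)]
    exact energy_plus_nonneg X σ hp hJ hσ
  · rw [energy_const p J X (-1) (by norm_num), energy_neg_bc]
    exact energy_plus_nonneg X (fun x => -σ x) hp hJ hσ'
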